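/- Let (S, ≤) be a semilinear order and f : S → S injective, preserving B and ¬B. Define T := {x ∈ S | ∃ y, x < y ∧ f(y) < f(x)}. Assume the richness conditions of a dense binary-branching semilinear order (density, no endpoints, any two incomparable elements have a least upper bound, and every pair of elements has strict upper bounds). Then T is upward closed: if x ∈ T and x < y then y ∈ T. -/
import Mathlib


variable {S : Type*} [PartialOrder S]

/-- Incomparability in a partial order. -/
def Incomp (x y : S) : Prop := ¬ x ≤ y ∧ ¬ y ≤ x

/-- Betweenness relation of a semilinear order. -/
def TreeBtw (a b c : S) : Prop :=
  b ≠ a ∧ b ≠ c ∧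
    ((a < b ∧ b ≤ c) ∨ (c < b ∧ b ≤ a) ∨
      (Incomp a c ∧ a < b ∧ c < b ∧ ∀ d, a < d → c < d → b ≤ d))

/-- The set T = {x | ∃ y, x < y ∧ f y < f x} is upward closed. -/
theorem reversing_set_upward_closed
    (hchain : ∀ x y z : S, x ≤ y → x ≤ z → y ≤ z ∨ z ≤ y)
    (hub : ∀ x y : S, ∃ z, x ≤ z ∧ y ≤ z)
    (hdense : ∀ a b : S, a < b → ∃ c, a < c ∧ c < b)
    (hnomax : ∀ a : S, ∃ b, a < b)
    (hnomin : ∀ a : S, ∃ b, b < a)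
    (hlub : ∀ a c : S, Incomp a c → ∃ z, a < z ∧ c < z ∧ ∀ d, a < d → c < d → z ≤ d)
    (hstrictub : ∀ x y : S, ∃ z, x < z ∧ y < z)
    (f : S → S) (hinj : Function.Injective f)
    (hB : ∀ x y z : S, TreeBtw x y z → TreeBtw (f x) (f y) (f z))
    (hnB : ∀ x y z : S, x ≠ y → y ≠ z → z ≠ x → ¬ TreeBtw x y z →
      ¬ TreeBtw (f x) (f y) (f z)) :
    ∀ x y : S, x ∈ {x : S | ∃ y, x < y ∧ f y < f x} → x < y →
      y ∈ {x : S | ∃ y, x < y ∧ f y < f x} := by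
  rintro x y ⟨w, hxw, hfw⟩ hxy
  have lemA : ∀ u, x < u → f u < f x := by
    intro u hxu
    rcases hchain x w u hxw.le hxu.le with h | h
    · rcases eq_or_lt_of_le h with rfl | hwu
      · exact hfw
      · have hb : TreeBtw x w u := ⟨hxw.ne', hwu.ne, Or.inl ⟨hxw, hwu.le⟩⟩
        obtain ⟨h1, h2, h3⟩ := hB _ _ _ hb
        rcases h3 with ⟨ha, _⟩ | ⟨ha, hb'⟩ | ⟨_, ha, _⟩
        · exact absurd ha (not_lt_of_gt hfw)
        · exact ha.trans_le (le_of_lt hfw)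
        · exact absurd ha (not_lt_of_gt hfw)
    · rcases eq_or_lt_of_le h with rfl | huw
      · exact hfw
      · have hb : TreeBtw x u w := ⟨hxu.ne', huw.ne, Or.inl ⟨hxu, huw.le⟩⟩
        obtain ⟨h1, h2, h3⟩ := hB _ _ _ hb
        rcases h3 with ⟨ha, hb'⟩ | ⟨_, hb'⟩ | ⟨⟨hi1, hi2⟩, _⟩
        · exact absurd (ha.trans_le hb') (not_lt_of_gt hfw)
        · exact lt_of_le_of_ne hb' (fun he => hxu.ne' (hinj he))
        · exact absurd hfw.le hi2
  obtain ⟨z, hyz⟩ := hnomax y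
  have hfz : f z < f x := lemA z (hxy.trans hyz)
  have hfy : f y < f x := lemA y hxy
  have hb : TreeBtw x y z := ⟨hxy.ne', hyz.ne, Or.inl ⟨hxy, hyz.le⟩⟩
  obtain ⟨h1, h2, h3⟩ := hB _ _ _ hb
  rcases h3 with ⟨ha, _⟩ | ⟨ha, _⟩ | ⟨⟨_, hi2⟩, _⟩
  · exact absurd ha (not_lt_of_gt hfy)
  · exact ⟨z, hyz, ha⟩
  · exact absurd hfz.le hi2
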